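/- Let A = KΔ/R_Δ^n be a truncated cycle algebra on the cyclic quiver with s vertices, s | n. With basis u_i = x_{i+1}⋯x_{i+n−1} ⊗ x_i of (A ⊗_{KΔ_0^e} KΔ_1)_n and v_i = e_i ⊗ x_i x_{i+1}⋯x_{i+n−1} of (A ⊗_{KΔ_0^e} KΔ_n)_n, the differential (d̃_2)_n is represented by the s × s matrix all of whose entries equal n/s (i.e. (d̃_2)_n(u_j) = (n/s)·(v_1 + ⋯ + v_s) for every j). -/

import Mathlib

/-- The degree-`q` component of Sköldberg's complex for the truncated cycle algebra
`A = KΔ/R_Δ^n` on the cyclic quiver with `s` vertices: a `K`-vector space with basis the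
cycles of length `q` (one for each starting vertex, nonempty precisely when `s ∣ q`). -/
abbrev CycSp (K : Type*) [Field K] (s q : ℕ) : Type _ := {_i : ZMod s // s ∣ q} → K

/-- The degree-`q` part `(d̃₃)_q : (A ⊗ P₃)_q → (A ⊗ P₂)_q` of the differential,
`(d̃₃)_q(a₁⋯a_{q−n−1} ⊗ a_{q−n}⋯a_q)
  = a₁⋯a_{q−n} ⊗ a_{q−n+1}⋯a_q − a_q a₁⋯a_{q−n−1} ⊗ a_{q−n}⋯a_{q−1}`;
on the basis `w_i ↦ v_{i+1} − v_i`, and it is zero outside the range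
`n+1 ≤ q ≤ 2n−1` where source or target vanish. -/
noncomputable def dTilde3 (K : Type*) [Field K] (s n q : ℕ) :
    CycSp K s q →ₗ[K] CycSp K s q :=
  if n + 1 ≤ q ∧ q ≤ 2 * n - 1 then
    LinearMap.funLeft K K (fun i => ⟨i.1 - 1, i.2⟩) - LinearMap.id
  else 0

/-- The degree-`q` part `(d̃₂)_q : (A ⊗ P₂)_q → (A ⊗ P₁)_q` of the differential,
`(d̃₂)_q(a₁⋯a_{q−n} ⊗ a_{q−n+1}⋯a_q)
  = Σ_{j=0}^{n−1} a_{j+q−n+2}⋯a_q a₁⋯a_{j+q−n} ⊗ a_{j+q−n+1}`;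
on the basis `v_i ↦ Σ_{j=0}^{n−1} u_{i+j}`, and it is zero for `q ≠ n`
(the terms vanish in `A` for `q ≥ n+1`). -/
noncomputable def dTilde2 (K : Type*) [Field K] (s n q : ℕ) :
    CycSp K s q →ₗ[K] CycSp K s q :=
  if q = n then
    ∑ j ∈ Finset.range n, LinearMap.funLeft K K (fun i => ⟨i.1 - (j : ZMod s), i.2⟩)
  else 0

/-- The degree-`q` component `HH_{2,q}(A) = ker (d̃₂)_q / im (d̃₃)_q` of the graded
second Hochschild homology of the truncated cycle algebra. -/
noncomputable abbrev HH2q (K : Type*) [Field K] (s n q : ℕ) : Type _ :=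
  LinearMap.ker (dTilde2 K s n q) ⧸
    Submodule.comap (LinearMap.ker (dTilde2 K s n q)).subtype
      (LinearMap.range (dTilde3 K s n q))


lemma sum_range_period (K : Type*) [Field K] (s : ℕ) [NeZero s] (c : ZMod s) :
    ∑ j ∈ Finset.range s, (if ((j : ZMod s)) = c then (1 : K) else 0) = 1 := by
  classical
  rw [Finset.sum_boole]
  have : Finset.filter (fun j : ℕ => ((j : ZMod s)) = c) (Finset.range s) = ({c.val} : Finset ℕ) := by
    ext j
    simp only [Finset.mem_filter, Finset.mem_range, Finset.mem_singleton]
    constructor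
    · rintro ⟨hj, rfl⟩; exact (ZMod.val_natCast_of_lt hj).symm
    · rintro rfl; exact ⟨ZMod.val_lt c, ZMod.natCast_zmod_val c⟩
  rw [this]; simp

lemma sum_range_indicator (K : Type*) [Field K] (s : ℕ) [NeZero s] (m : ℕ) (c : ZMod s) :
    ∑ j ∈ Finset.range (s * m), (if ((j : ZMod s)) = c then (1 : K) else 0) = m := by
  induction m with
  | zero => simp
  | succ m ih =>
    rw [Nat.mul_succ, Finset.range_add, Finset.sum_union (by
      simp only [Finset.disjoint_left, Finset.mem_map, Finset.mem_range, addLeftEmbedding_apply]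
      rintro a ha ⟨b, hb, rfl⟩; omega), ih, Finset.sum_map]
    simp only [addLeftEmbedding_apply]
    have : ∀ j, ((s * m + j : ℕ) : ZMod s) = (j : ZMod s) := by
      intro j; push_cast; simp [ZMod.natCast_self]
    simp only [this, sum_range_period]
    push_cast; ring

/-- for `s ∣ n`, on the bases `u_i` of `(A ⊗ KΔ₀ᵉ KΔ₁)_n` and `v_i` of
`(A ⊗ KΔ₀ᵉ KΔ_n)_n`, the differential `(d̃₂)_n` is represented by the `s × s` matrix all
of whose entries equal `n/s`, i.e. it sends each basis vector to
`(n/s)·(v₁ + ⋯ + v_s)`. -/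
theorem dTilde2_matrix (K : Type*) [Field K] (s n : ℕ) [NeZero s]
    (hn : 2 ≤ n) (hd : s ∣ n) :
    ∀ i : ZMod s,
      dTilde2 K s n n (Pi.single ⟨i, hd⟩ 1) =
        (((n / s : ℕ) : K)) •
          (∑ k : {_i : ZMod s // s ∣ n}, Pi.single k 1 : CycSp K s n) := by
  classical
  intro i
  funext x
  simp only [dTilde2, if_pos rfl, if_true, LinearMap.sum_apply, LinearMap.funLeft_apply,
    Finset.sum_apply, Pi.smul_apply, smul_eq_mul]
  have hpt : ∀ j : ℕ, (Pi.single (M := fun _ => K) (⟨i, hd⟩ : {_i : ZMod s // s ∣ n}) 1)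
      ⟨x.1 - (j : ZMod s), x.2⟩ = if ((j : ZMod s)) = x.1 - i then (1 : K) else 0 := by
    intro j
    rw [Pi.single_apply]
    congr 1
    rw [Subtype.ext_iff, eq_iff_iff]
    constructor
    · intro h; simp only at h ⊢; rw [← h]; ring
    · intro h; simp only at h ⊢; rw [h]; ring
  rw [Finset.sum_congr rfl (fun j _ => hpt j)]
  have hcount := sum_range_indicator K s (n / s) (x.1 - i)
  rw [Nat.mul_div_cancel' hd] at hcount
  rw [hcount]
  have : (∑ k : {_i : ZMod s // s ∣ n}, Pi.single (M := fun _ => K) k 1 x) = 1 := by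
    simp only [Pi.single_apply]
    rw [Finset.sum_ite_eq Finset.univ x (fun _ => (1 : K))]
    simp
  rw [this, mul_one]
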